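/- The ring of invariants of SL(2,ℂ) under the right action of the unipotent subgroup N of upper triangular matrices with 1's on the diagonal (acting by right multiplication) is the polynomial ring freely generated by the matrix entries x₁₁ and x₂₁. -/

import Mathlib

/-- Membership in the maximal unipotent subgroup `N` of upper triangular
matrices with 1's on the diagonal, inside `SL(2,ℂ)`. -/
def IsUnipotentUpper (u : Matrix.SpecialLinearGroup (Fin 2) ℂ) : Prop :=
  (u : Matrix (Fin 2) (Fin 2) ℂ) 0 0 = 1 ∧
  (u : Matrix (Fin 2) (Fin 2) ℂ) 1 1 = 1 ∧
  (u : Matrix (Fin 2) (Fin 2) ℂ) 1 0 = 0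

noncomputable section SL2InvAux

open MvPolynomial

private abbrev SL2C := Matrix.SpecialLinearGroup (Fin 2) ℂ
private abbrev A2 := MvPolynomial (Fin 2) ℂ

private lemma prime_X_fin2 (i : Fin 2) : Prime (X i : A2) := by
  have h0 : Prime (X (0 : Fin 2) : A2) := by
    rw [← MulEquiv.prime_iff (finSuccEquiv ℂ 1).toMulEquiv]
    show Prime ((finSuccEquiv ℂ 1) (X 0))
    rw [finSuccEquiv_X_zero]
    exact Polynomial.prime_X
  fin_cases i
  · exact h0
  · rw [← MulEquiv.prime_iff (renameEquiv ℂ (Equiv.swap (0 : Fin 2) 1)).toMulEquiv]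
    show Prime ((renameEquiv ℂ (Equiv.swap (0 : Fin 2) 1)) (X 1))
    rw [renameEquiv_apply, rename_X]
    simpa using h0

private lemma eq_zero_of_eval_and (p : A2)
    (h : ∀ v : Fin 2 → ℂ, v 0 ≠ 0 → v 1 ≠ 0 → eval v p = 0) : p = 0 := by
  have h2 : p * (X 0 * X 1) = 0 := by
    apply MvPolynomial.funext (q := 0)
    intro v
    simp only [map_mul, map_zero, eval_X]
    by_cases h0 : v 0 = 0
    · simp [h0]
    by_cases h1 : v 1 = 0
    · simp [h1]
    · rw [h v h0 h1]; ring
  rcases mul_eq_zero.mp h2 with h | h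
  · exact h
  · exact absurd h (mul_ne_zero (X_ne_zero _) (X_ne_zero _))

private lemma eq_zero_of_eval_or (p : A2)
    (h : ∀ v : Fin 2 → ℂ, (v 0 ≠ 0 ∨ v 1 ≠ 0) → eval v p = 0) : p = 0 := by
  have h2 : p * X 0 = 0 := by
    apply MvPolynomial.funext (q := 0)
    intro v
    simp only [map_mul, map_zero, eval_X]
    by_cases h0 : v 0 = 0
    · by_cases h1 : v 1 = 0
      · simp [h0]
      · rw [h v (Or.inr h1)]; ring
    · rw [h v (Or.inl h0)]; ring
  rcases mul_eq_zero.mp h2 with h | h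
  · exact h
  · exact absurd h (X_ne_zero _)

private lemma col_eq_of_unipotent (g u : SL2C) (hu : IsUnipotentUpper u) (i : Fin 2) :
    ((g * u : SL2C) : Matrix (Fin 2) (Fin 2) ℂ) i 0 = (g : Matrix (Fin 2) (Fin 2) ℂ) i 0 := by
  rw [Matrix.SpecialLinearGroup.coe_mul, Matrix.mul_apply, Fin.sum_univ_two, hu.1, hu.2.2]
  ring

private lemma f_eq_of_col_eq (f : SL2C → ℂ)
    (hf : ∀ g u, IsUnipotentUpper u → f (g * u) = f g) (g g' : SL2C)
    (h0 : (g : Matrix (Fin 2) (Fin 2) ℂ) 0 0 = (g' : Matrix (Fin 2) (Fin 2) ℂ) 0 0)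
    (h1 : (g : Matrix (Fin 2) (Fin 2) ℂ) 1 0 = (g' : Matrix (Fin 2) (Fin 2) ℂ) 1 0) :
    f g' = f g := by
  set u := g⁻¹ * g' with hu
  have hentries : ∀ i j : Fin 2,
      (u : Matrix (Fin 2) (Fin 2) ℂ) i j =
        ((g : Matrix (Fin 2) (Fin 2) ℂ).adjugate * (g' : Matrix (Fin 2) (Fin 2) ℂ)) i j := by
    intro i j
    rw [hu, Matrix.SpecialLinearGroup.coe_mul, Matrix.SpecialLinearGroup.coe_inv]
  have hadj := Matrix.adjugate_fin_two (g : Matrix (Fin 2) (Fin 2) ℂ)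
  have hdetg : (g : Matrix (Fin 2) (Fin 2) ℂ).det = 1 := g.2
  rw [Matrix.det_fin_two] at hdetg
  have hu00 : (u : Matrix (Fin 2) (Fin 2) ℂ) 0 0 = 1 := by
    rw [hentries, Matrix.mul_apply, Fin.sum_univ_two, hadj]
    simp only [Matrix.cons_val_zero, Matrix.cons_val_one, Matrix.head_cons, Matrix.of_apply,
      Matrix.cons_val', Matrix.empty_val', Matrix.cons_val_fin_one, Matrix.head_fin_const]
    rw [← h0, ← h1]; linear_combination hdetg
  have hu10 : (u : Matrix (Fin 2) (Fin 2) ℂ) 1 0 = 0 := by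
    rw [hentries, Matrix.mul_apply, Fin.sum_univ_two, hadj]
    simp only [Matrix.cons_val_zero, Matrix.cons_val_one, Matrix.head_cons, Matrix.of_apply,
      Matrix.cons_val', Matrix.empty_val', Matrix.cons_val_fin_one, Matrix.head_fin_const]
    rw [← h0, ← h1]; ring
  have hdetu : (u : Matrix (Fin 2) (Fin 2) ℂ).det = 1 := u.2
  rw [Matrix.det_fin_two, hu00, hu10] at hdetu
  have hu11 : (u : Matrix (Fin 2) (Fin 2) ℂ) 1 1 = 1 := by linear_combination hdetu
  have hgu : g' = g * u := by rw [hu, mul_inv_cancel_left]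
  rw [hgu]
  exact hf g u ⟨hu00, hu11, hu10⟩

private lemma extract1 (f : SL2C → ℂ) (P : MvPolynomial (Fin 2 × Fin 2) ℂ)
    (hP : ∀ g : SL2C, f g = eval (fun p => (g : Matrix (Fin 2) (Fin 2) ℂ) p.1 p.2) P) :
    ∃ (R : A2) (n : ℕ), ∀ v : Fin 2 → ℂ, v 1 ≠ 0 → ∀ g : SL2C,
      (g : Matrix (Fin 2) (Fin 2) ℂ) 0 0 = v 0 →
      (g : Matrix (Fin 2) (Fin 2) ℂ) 0 1 = -(v 1)⁻¹ →
      (g : Matrix (Fin 2) (Fin 2) ℂ) 1 0 = v 1 →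
      (g : Matrix (Fin 2) (Fin 2) ℂ) 1 1 = 0 →
      eval v R = v 1 ^ n * f g := by
  set B := Localization.Away (X 1 : A2) with hB
  let t : B := IsLocalization.Away.invSelf (X 1 : A2)
  let am : A2 →+* B := algebraMap A2 B
  let vars : Fin 2 × Fin 2 → B := fun p => !![am (X 0), -t; am (X 1), 0] p.1 p.2
  let φ : MvPolynomial (Fin 2 × Fin 2) ℂ →+* B := eval₂Hom (am.comp MvPolynomial.C) vars
  obtain ⟨⟨R, mm⟩, hRm⟩ := IsLocalization.surj (Submonoid.powers (X 1 : A2)) (φ P)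
  obtain ⟨n, hn⟩ := mm.2
  refine ⟨R, n, ?_⟩
  intro v hv g hg00 hg01 hg10 hg11
  have hunit : IsUnit ((eval v : A2 →+* ℂ) (X 1)) := by
    rw [eval_X]; exact isUnit_iff_ne_zero.mpr hv
  let ψ : B →+* ℂ := IsLocalization.Away.lift (X 1 : A2) hunit
  have hψalg : ∀ a : A2, ψ (am a) = eval v a := fun a => IsLocalization.lift_eq _ _
  have hv1t : v 1 * ψ t = 1 := by
    have := congrArg ψ (IsLocalization.Away.mul_invSelf (S := B) (X 1 : A2))
    rw [map_mul, map_one, hψalg, eval_X] at this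
    exact this
  have hψt : (v 1)⁻¹ = ψ t := inv_eq_of_mul_eq_one_right hv1t
  have hcomp : ψ (φ P) = eval (fun p => (g : Matrix (Fin 2) (Fin 2) ℂ) p.1 p.2) P := by
    show ψ (eval₂ (am.comp MvPolynomial.C) vars P) = _
    rw [eval₂_comp_left ψ]
    have h1 : ψ.comp (am.comp MvPolynomial.C) = RingHom.id ℂ := by
      ext r
      simp only [RingHom.coe_comp, Function.comp_apply, RingHom.id_apply]
      rw [hψalg, eval_C]
    have h2 : (ψ ∘ vars) = fun p => (g : Matrix (Fin 2) (Fin 2) ℂ) p.1 p.2 := by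
      funext p
      have hψ0 : ψ (am (X 0)) = v 0 := by rw [hψalg, eval_X]
      have hψ1 : ψ (am (X 1)) = v 1 := by rw [hψalg, eval_X]
      fin_cases p <;>
        simp [vars, Fin.mk_zero, Fin.mk_one, Matrix.cons_val_zero, Matrix.cons_val_one,
          Matrix.head_cons, hψ0, hψ1, hg00, hg01, hg10, hg11, ← hψt]
    rw [h1, h2]
    rfl
  have key := congrArg ψ hRm
  rw [map_mul, hψalg, hψalg, hcomp, ← hn, map_pow, eval_X, ← hP g] at key
  exact key.symm.trans (mul_comm _ _)

private lemma extract0 (f : SL2C → ℂ) (P : MvPolynomial (Fin 2 × Fin 2) ℂ)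
    (hP : ∀ g : SL2C, f g = eval (fun p => (g : Matrix (Fin 2) (Fin 2) ℂ) p.1 p.2) P) :
    ∃ (S : A2) (m : ℕ), ∀ v : Fin 2 → ℂ, v 0 ≠ 0 → ∀ g : SL2C,
      (g : Matrix (Fin 2) (Fin 2) ℂ) 0 0 = v 0 →
      (g : Matrix (Fin 2) (Fin 2) ℂ) 0 1 = 0 →
      (g : Matrix (Fin 2) (Fin 2) ℂ) 1 0 = v 1 →
      (g : Matrix (Fin 2) (Fin 2) ℂ) 1 1 = (v 0)⁻¹ →
      eval v S = v 0 ^ m * f g := by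
  set B := Localization.Away (X 0 : A2) with hB
  let t : B := IsLocalization.Away.invSelf (X 0 : A2)
  let am : A2 →+* B := algebraMap A2 B
  let vars : Fin 2 × Fin 2 → B := fun p => !![am (X 0), 0; am (X 1), t] p.1 p.2
  let φ : MvPolynomial (Fin 2 × Fin 2) ℂ →+* B := eval₂Hom (am.comp MvPolynomial.C) vars
  obtain ⟨⟨S, mm⟩, hSm⟩ := IsLocalization.surj (Submonoid.powers (X 0 : A2)) (φ P)
  obtain ⟨m, hm⟩ := mm.2
  refine ⟨S, m, ?_⟩
  intro v hv g hg00 hg01 hg10 hg11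
  have hunit : IsUnit ((eval v : A2 →+* ℂ) (X 0)) := by
    rw [eval_X]; exact isUnit_iff_ne_zero.mpr hv
  let ψ : B →+* ℂ := IsLocalization.Away.lift (X 0 : A2) hunit
  have hψalg : ∀ a : A2, ψ (am a) = eval v a := fun a => IsLocalization.lift_eq _ _
  have hv0t : v 0 * ψ t = 1 := by
    have := congrArg ψ (IsLocalization.Away.mul_invSelf (S := B) (X 0 : A2))
    rw [map_mul, map_one, hψalg, eval_X] at this
    exact this
  have hψt : (v 0)⁻¹ = ψ t := inv_eq_of_mul_eq_one_right hv0t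
  have hcomp : ψ (φ P) = eval (fun p => (g : Matrix (Fin 2) (Fin 2) ℂ) p.1 p.2) P := by
    show ψ (eval₂ (am.comp MvPolynomial.C) vars P) = _
    rw [eval₂_comp_left ψ]
    have h1 : ψ.comp (am.comp MvPolynomial.C) = RingHom.id ℂ := by
      ext r
      simp only [RingHom.coe_comp, Function.comp_apply, RingHom.id_apply]
      rw [hψalg, eval_C]
    have h2 : (ψ ∘ vars) = fun p => (g : Matrix (Fin 2) (Fin 2) ℂ) p.1 p.2 := by
      funext p
      have hψ0 : ψ (am (X 0)) = v 0 := by rw [hψalg, eval_X]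
      have hψ1 : ψ (am (X 1)) = v 1 := by rw [hψalg, eval_X]
      fin_cases p <;>
        simp [vars, Fin.mk_zero, Fin.mk_one, Matrix.cons_val_zero, Matrix.cons_val_one,
          Matrix.head_cons, hψ0, hψ1, hg00, hg01, hg10, hg11, ← hψt]
    rw [h1, h2]
    rfl
  have key := congrArg ψ hSm
  rw [map_mul, hψalg, hψalg, hcomp, ← hm, map_pow, eval_X, ← hP g] at key
  exact key.symm.trans (mul_comm _ _)

end SL2InvAux

open MvPolynomial in
/-- The ring of invariants of `SL(2,ℂ)` under right multiplication by `N` is the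
polynomial ring freely generated by the entries `x₁₁` and `x₂₁`: a regular
(polynomial) function on `SL(2,ℂ)` is `N`-invariant iff it is a polynomial in
the first-column entries, and distinct polynomials in `x₁₁, x₂₁` give distinct
functions. -/
theorem invariants_SL2_unipotent :
    (∀ f : Matrix.SpecialLinearGroup (Fin 2) ℂ → ℂ,
      (∃ P : MvPolynomial (Fin 2 × Fin 2) ℂ,
        ∀ g, f g = MvPolynomial.eval
          (fun p => (g : Matrix (Fin 2) (Fin 2) ℂ) p.1 p.2) P) →
      ((∀ g u, IsUnipotentUpper u → f (g * u) = f g) ↔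
        ∃ Q : MvPolynomial (Fin 2) ℂ,
          ∀ g, f g = MvPolynomial.eval
            (fun i => (g : Matrix (Fin 2) (Fin 2) ℂ) i 0) Q)) ∧
    Function.Injective (fun Q : MvPolynomial (Fin 2) ℂ =>
      (fun g : Matrix.SpecialLinearGroup (Fin 2) ℂ =>
        MvPolynomial.eval (fun i => (g : Matrix (Fin 2) (Fin 2) ℂ) i 0) Q)) := by
  constructor
  · rintro f ⟨P, hP⟩
    constructor
    · intro hf
      obtain ⟨R, n, hR⟩ := extract1 f P hP
      obtain ⟨S, m, hS⟩ := extract0 f P hP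
      -- the key polynomial identity
      have hid : (X 0 : A2) ^ m * R = X 1 ^ n * S := by
        rw [← sub_eq_zero]
        apply eq_zero_of_eval_and
        intro v h0 h1
        have hdet1 : (!![v 0, -(v 1)⁻¹; v 1, 0] : Matrix (Fin 2) (Fin 2) ℂ).det = 1 := by
          rw [Matrix.det_fin_two_of]; field_simp; ring
        have hdet2 : (!![v 0, 0; v 1, (v 0)⁻¹] : Matrix (Fin 2) (Fin 2) ℂ).det = 1 := by
          rw [Matrix.det_fin_two_of]; field_simp; ring
        set g1 : SL2C := ⟨_, hdet1⟩ with hg1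
        set g2 : SL2C := ⟨_, hdet2⟩ with hg2
        have e1 := hR v h1 g1 (by simp [hg1]) (by simp [hg1]) (by simp [hg1]) (by simp [hg1])
        have e2 := hS v h0 g2 (by simp [hg2]) (by simp [hg2]) (by simp [hg2]) (by simp [hg2])
        have hfe : f g1 = f g2 := by
          apply f_eq_of_col_eq f hf g2 g1
          · simp [hg1, hg2]
          · simp [hg1, hg2]
        rw [map_sub, map_mul, map_mul, map_pow, map_pow, eval_X, eval_X, e1, e2, hfe]
        ring
      have hndvd : ¬ (X 1 : A2) ∣ (X 0 : A2) ^ m := by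
        intro hd
        obtain ⟨k, hk⟩ := (prime_X_fin2 1).dvd_of_dvd_pow hd
        have := congrArg (eval (fun i : Fin 2 => if i = 0 then (1 : ℂ) else 0)) hk
        simp [eval_X] at this
      obtain ⟨Q, hQ⟩ : (X 1 : A2) ^ n ∣ R :=
        (prime_X_fin2 1).pow_dvd_of_dvd_mul_left n hndvd ⟨S, hid⟩
      have hSQ : S = X 0 ^ m * Q := by
        have h1 : (X 1 : A2) ^ n * (X 0 ^ m * Q) = X 1 ^ n * S := by
          rw [← hid, hQ]; ring
        exact (mul_left_cancel₀ (pow_ne_zero _ (X_ne_zero _)) h1).symm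
      refine ⟨Q, ?_⟩
      intro g
      set v : Fin 2 → ℂ := fun i => (g : Matrix (Fin 2) (Fin 2) ℂ) i 0 with hvdef
      by_cases hc : v 1 = 0
      · -- first column is (a, 0) with a ≠ 0; use S
        have ha : v 0 ≠ 0 := by
          intro h0
          have hdetg : (g : Matrix (Fin 2) (Fin 2) ℂ).det = 1 := g.2
          rw [Matrix.det_fin_two] at hdetg
          have hv0 : (g : Matrix (Fin 2) (Fin 2) ℂ) 0 0 = 0 := h0
          have hv1 : (g : Matrix (Fin 2) (Fin 2) ℂ) 1 0 = 0 := hc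
          rw [hv0, hv1] at hdetg
          simp at hdetg
        have hdet2 : (!![v 0, 0; v 1, (v 0)⁻¹] : Matrix (Fin 2) (Fin 2) ℂ).det = 1 := by
          rw [Matrix.det_fin_two_of]; field_simp; ring
        set g2 : SL2C := ⟨_, hdet2⟩ with hg2
        have e2 := hS v ha g2 (by simp [hg2]) (by simp [hg2]) (by simp [hg2]) (by simp [hg2])
        have hfe : f g2 = f g := by
          apply f_eq_of_col_eq f hf g g2
          · simp [hg2, hvdef]
          · simp [hg2, hvdef]
        rw [hSQ, map_mul, map_pow, eval_X, hfe] at e2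
        have := mul_left_cancel₀ (pow_ne_zero m ha) e2
        exact this.symm
      · -- first column is (a, c) with c ≠ 0; use R
        have hdet1 : (!![v 0, -(v 1)⁻¹; v 1, 0] : Matrix (Fin 2) (Fin 2) ℂ).det = 1 := by
          rw [Matrix.det_fin_two_of]; field_simp; ring
        set g1 : SL2C := ⟨_, hdet1⟩ with hg1
        have e1 := hR v hc g1 (by simp [hg1]) (by simp [hg1]) (by simp [hg1]) (by simp [hg1])
        have hfe : f g1 = f g := by
          apply f_eq_of_col_eq f hf g g1
          · simp [hg1, hvdef]
          · simp [hg1, hvdef]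
        rw [hQ, map_mul, map_pow, eval_X, hfe] at e1
        have := mul_left_cancel₀ (pow_ne_zero n hc) e1
        exact this.symm
    · rintro ⟨Q, hQ⟩ g u hu
      rw [hQ, hQ]
      have hcol : (fun i => ((g * u : SL2C) : Matrix (Fin 2) (Fin 2) ℂ) i 0) =
          (fun i => (g : Matrix (Fin 2) (Fin 2) ℂ) i 0) :=
        funext (col_eq_of_unipotent g u hu)
      rw [hcol]
  · intro Q1 Q2 h
    rw [← sub_eq_zero]
    apply eq_zero_of_eval_or
    intro v hv
    have base : ∀ g : SL2C, (fun i => (g : Matrix (Fin 2) (Fin 2) ℂ) i 0) = v →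
        eval v Q1 = eval v Q2 := by
      intro g hg
      have := congrFun h g
      simp only at this
      rw [← hg]
      exact this
    rcases hv with h0 | h1
    · have hdet2 : (!![v 0, 0; v 1, (v 0)⁻¹] : Matrix (Fin 2) (Fin 2) ℂ).det = 1 := by
        rw [Matrix.det_fin_two_of]; field_simp; ring
      have hcol : (fun i => ((⟨_, hdet2⟩ : SL2C) : Matrix (Fin 2) (Fin 2) ℂ) i 0) = v := by
        funext i
        fin_cases i <;> simp
      rw [map_sub, base ⟨_, hdet2⟩ hcol, sub_self]
    · have hdet1 : (!![v 0, -(v 1)⁻¹; v 1, 0] : Matrix (Fin 2) (Fin 2) ℂ).det = 1 := by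
        rw [Matrix.det_fin_two_of]; field_simp; ring
      have hcol : (fun i => ((⟨_, hdet1⟩ : SL2C) : Matrix (Fin 2) (Fin 2) ℂ) i 0) = v := by
        funext i
        fin_cases i <;> simp
      rw [map_sub, base ⟨_, hdet1⟩ hcol, sub_self]
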